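/- Let a > 0 and 0 < q < p be real numbers with q·e^{a(p−q)} < p, and set g_b = (e^{a(p−q)} − 1)/(p − q·e^{a(p−q)}). Then for every g1 ≥ 0: log(1 + g1·p) − a·p ≥ log(1 + g1·q) − a·q if and only if g1 ≥ g_b. -/

import Mathlib

open Real

/-- Nearest-neighbor structure: for power levels `p > q > 0` and `a > 0` with
`q e^{a(p-q)} < p`, the channel gains `g1 ≥ 0` preferring the larger power level `p`
(in the per-realization Lagrangian sense) are exactly those above the boundary value
`g_b = (e^{a(p-q)} - 1)/(p - q e^{a(p-q)})`. -/
theorem nearest_neighbor_halfline (a p q : ℝ) (ha : 0 < a) (hq : 0 < q) (hqp : q < p)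
    (hden : q * Real.exp (a * (p - q)) < p) :
    ∀ g1 : ℝ, 0 ≤ g1 →
      (Real.log (1 + g1 * q) - a * q ≤ Real.log (1 + g1 * p) - a * p ↔
        (Real.exp (a * (p - q)) - 1) / (p - q * Real.exp (a * (p - q))) ≤ g1) := by
  intro g1 hg1
  set E := Real.exp (a * (p - q)) with hE
  have hEpos : 0 < E := Real.exp_pos _
  have hdpos : 0 < p - q * E := by linarith
  have h1q : (0:ℝ) < 1 + g1 * q := by nlinarith
  have h1p : (0:ℝ) < 1 + g1 * p := by nlinarith
  have key : Real.log (1 + g1 * q) - a * q ≤ Real.log (1 + g1 * p) - a * p ↔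
      E ≤ (1 + g1 * p) / (1 + g1 * q) := by
    rw [div_eq_mul_inv, ← Real.log_le_log_iff hEpos (by positivity),
      Real.log_mul (ne_of_gt h1p) (by positivity), Real.log_inv, hE, Real.log_exp]
    constructor <;> intro h <;> nlinarith [h]
  rw [key, le_div_iff₀ h1q, div_le_iff₀ hdpos]
  constructor <;> intro h <;> nlinarith [h]
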